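/- arXiv:1001.1556 — 2 statements merged into one kernel-verified Lean document; each statement's English description precedes it below -/
import Mathlib

section
/- (Beck's characterization of descent) Let T = (T, μ, η) be a monad on a category C admitting equalizers. The canonical functor can : C ⥤ D(T) into the descent category (coalgebras over the comonad K^T on C^T) is fully faithful if and only if for every object C of C, the fork C → T C ⇉ T²C given by η_C and the pair (T η_C, η_{T C}) is an equalizer diagram. -/
/-!
STATEMENT 6 (Beck's characterization of descent): for a monad `T` on a category `C` with
equalizers, the canonical functor `can : C ⥤ D(T)` into the descent category (coalgebras
over the comonad `K^T = F^T U^T` on `C^T`) is fully faithful if and only if, for every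
object `X`, the fork `X → T X ⇉ T² X` given by `η_X` and the pair `(T η_X, η_{T X})` is
an equalizer diagram.
-/

open CategoryTheory CategoryTheory.Limits

private lemma fork_aux {C : Type*} [Category C] {A B P : C} {f g f' g' : A ⟶ B}
    {ι ι' : P ⟶ A} (hf : f = f') (hg : g = g') (hι : ι = ι')
    {w : ι ≫ f = ι ≫ g} {w' : ι' ≫ f' = ι' ≫ g'} :
    Nonempty (IsLimit (Fork.ofι ι w)) ↔ Nonempty (IsLimit (Fork.ofι ι' w')) := by
  subst hf; subst hg; subst hι; rfl

theorem stmt_6 {C : Type*} [Category C] [HasEqualizers C] (T : Monad C) :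
    ((Comonad.comparison T.adj).Full ∧ (Comonad.comparison T.adj).Faithful) ↔
      ∀ X : C,
        Nonempty (IsLimit (Fork.ofι (f := T.map (T.η.app X)) (g := T.η.app (T.obj X))
          (T.η.app X) (by simpa using (T.η.naturality (T.η.app X)).symm))) := by
  have hf : ∀ X : C, T.map (T.η.app X) = T.forget.map (T.free.map (T.adj.unit.app X)) := by
    intro X; simp [Monad.adj]; erw [Category.comp_id]; rfl
  have hg : ∀ X : C, T.η.app (T.obj X) = T.adj.unit.app (T.forget.obj (T.free.obj X)) := by
    intro X; simp [Monad.adj]; erw [Category.comp_id]; rfl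
  have hι : ∀ X : C, T.η.app X = T.adj.unit.app X := by
    intro X; simp [Monad.adj]; erw [Category.comp_id]
  have key : ∀ X : C,
      Nonempty (IsLimit (Fork.ofι (f := T.map (T.η.app X)) (g := T.η.app (T.obj X))
          (T.η.app X) (by simpa using (T.η.naturality (T.η.app X)).symm))) ↔
      Nonempty (IsLimit (Comonad.ComonadicityInternal.unitFork T.adj X)) := by
    intro X
    exact fork_aux (hf X) (hg X) (hι X)
  constructor
  · rintro ⟨hFull, hFaith⟩ X
    rw [key X]
    have h1 : IsIso ((Comonad.ComonadicityInternal.comparisonAdjunction T.adj).unit.app X) :=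
      inferInstance
    rw [Comonad.ComonadicityInternal.comparisonAdjunction_unit_app] at h1
    exact ⟨IsLimit.ofPointIso (limit.isLimit _) (i := h1)⟩
  · intro h
    have h1 : ∀ X : C,
        IsIso ((Comonad.ComonadicityInternal.comparisonAdjunction T.adj).unit.app X) := by
      intro X
      rw [Comonad.ComonadicityInternal.comparisonAdjunction_unit_app]
      obtain ⟨hl⟩ := (key X).1 (h X)
      exact (hl.conePointUniqueUpToIso (limit.isLimit _)).isIso_hom
    have h2 : IsIso ((Comonad.ComonadicityInternal.comparisonAdjunction T.adj).unit) :=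
      NatIso.isIso_of_isIso_app _
    have h3 := (Comonad.ComonadicityInternal.comparisonAdjunction T.adj).fullyFaithfulLOfIsIsoUnit
    exact ⟨h3.full, h3.faithful⟩
end

section
/- (Beck's characterization of codescent) Let K = (K, Δ, ε) be a comonad on a category D admitting coequalizers. The canonical functor can : D ⥤ D^{co}(K) into the codescent category (algebras over the monad T_K on D_K) is fully faithful if and only if for every object D of D, the cofork K²D ⇉ K D → D given by the pair (K ε_D, ε_{K D}) and ε_D is a coequalizer diagram. -/
/-!
STATEMENT 7 (Beck's characterization of codescent): for a comonad `K` on a category `D`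
with coequalizers, the canonical functor `can : D ⥤ D^{co}(K)` into the codescent category
(algebras over the monad `T_K = F_K U_K` on `D_K`) is fully faithful if and only if, for
every object `X`, the cofork `K² X ⇉ K X → X` given by the pair `(K ε_X, ε_{K X})` and
`ε_X` is a coequalizer diagram.
-/

open CategoryTheory CategoryTheory.Limits

open CategoryTheory CategoryTheory.Limits CategoryTheory.Monad CategoryTheory.Monad.MonadicityInternal in
private lemma cofork_colimit_congr' {C : Type*} [Category C] {X Y : C} {f g f' g' : X ⟶ Y} {P : C}
    {π π' : Y ⟶ P} (hf : f = f') (hg : g = g') (hπ : π = π')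
    (h : f ≫ π = g ≫ π) (h' : f' ≫ π' = g' ≫ π') :
    Nonempty (IsColimit (Cofork.ofπ π h)) ↔ Nonempty (IsColimit (Cofork.ofπ π' h')) := by
  subst hf hg hπ; rfl

open CategoryTheory.Monad CategoryTheory.Monad.MonadicityInternal in
theorem stmt_7 {D : Type*} [Category D] [HasCoequalizers D] (K : Comonad D) :
    ((Monad.comparison K.adj).Full ∧ (Monad.comparison K.adj).Faithful) ↔
      ∀ X : D,
        Nonempty (IsColimit (Cofork.ofπ (f := K.map (K.ε.app X)) (g := K.ε.app (K.obj X))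
          (K.ε.app X) (by simpa using K.ε.naturality (K.ε.app X)))) := by
  haveI : ∀ A : K.adj.toMonad.Algebra,
      HasCoequalizer (K.forget.map A.a) (K.adj.counit.app (K.forget.obj A.A)) :=
    fun _ => inferInstance
  have key : ∀ X : D, Nonempty (IsColimit (counitCofork K.adj X)) ↔
      Nonempty (IsColimit (Cofork.ofπ (f := K.map (K.ε.app X)) (g := K.ε.app (K.obj X))
        (K.ε.app X) (by simpa using K.ε.naturality (K.ε.app X)))) := by
    intro X
    exact cofork_colimit_congr' (by simp; rfl) (by simp; rfl) (by simp; rfl) _ _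
  constructor
  · rintro ⟨hfull, hfaith⟩ X
    rw [← key]
    haveI := hfull; haveI := hfaith
    haveI : IsIso ((comparisonAdjunction K.adj).counit) :=
      Adjunction.counit_isIso_of_R_fully_faithful _
    have h1 : IsIso ((comparisonAdjunction K.adj).counit.app X) := inferInstance
    rw [comparisonAdjunction_counit_app, ← colimit.isColimit_desc] at h1
    exact ⟨IsColimit.ofPointIso (colimit.isColimit _) (i := h1)⟩
  · intro h
    have : ∀ X : D, IsIso ((comparisonAdjunction K.adj).counit.app X) := by
      intro X
      rw [comparisonAdjunction_counit_app]
      obtain ⟨hc⟩ := (key X).mpr (h X)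
      have heq : colimit.desc _ (counitCofork K.adj X) =
          ((colimit.isColimit _).coconePointUniqueUpToIso hc).hom := by
        rw [← colimit.isColimit_desc]; rfl
      rw [heq]
      exact Iso.isIso_hom _
    haveI : IsIso ((comparisonAdjunction K.adj).counit) := NatIso.isIso_of_isIso_app _
    have ff := (comparisonAdjunction K.adj).fullyFaithfulROfIsIsoCounit
    exact ⟨ff.full, ff.faithful⟩
end
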